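/- Let G be a non-trivial simple graph (with at least one edge). Then the Sombor energy satisfies E(G) ≥ √(tr(S²)³ / tr(S⁴)), where S = S(G) is the Sombor matrix. -/

import Mathlib

open scoped Classical

noncomputable def somborMatrix {V : Type*} [Fintype V] (G : SimpleGraph V) :
    Matrix V V ℝ := fun i j =>
  if G.Adj i j then Real.sqrt ((G.degree i : ℝ) ^ 2 + (G.degree j : ℝ) ^ 2) else 0

lemma somborMatrix_isHermitian {V : Type*} [Fintype V] (G : SimpleGraph V) :
    (somborMatrix G).IsHermitian := by
  apply Matrix.ext
  intro i j
  simp only [Matrix.conjTranspose_apply, star_trivial, somborMatrix]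
  rw [G.adj_comm, add_comm]

/-- The Sombor eigenvalues of `G`. -/
noncomputable def somborEigs {V : Type*} [Fintype V] (G : SimpleGraph V) : V → ℝ :=
  (somborMatrix_isHermitian G).eigenvalues

/-- The Sombor spectral radius (largest Sombor eigenvalue). -/
noncomputable def somborSpecRad {V : Type*} [Fintype V] (G : SimpleGraph V) : ℝ :=
  ⨆ i, somborEigs G i

/-- The Sombor energy. -/
noncomputable def somborEnergy {V : Type*} [Fintype V] (G : SimpleGraph V) : ℝ :=
  ∑ i, |somborEigs G i|

/-- The Sombor Estrada index. -/
noncomputable def somborEstrada {V : Type*} [Fintype V] (G : SimpleGraph V) : ℝ :=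
  ∑ i, Real.exp (somborEigs G i)

/-- The forgotten topological index `F = ∑ d_i ^ 3`. -/
noncomputable def forgottenIndex {V : Type*} [Fintype V] (G : SimpleGraph V) : ℝ :=
  ∑ i, (G.degree i : ℝ) ^ 3

lemma trace_pow_eq {m : Type*} [Fintype m] [DecidableEq m] {A : Matrix m m ℝ}
    (hA : A.IsHermitian) (k : ℕ) :
    (A ^ k).trace = ∑ i, hA.eigenvalues i ^ k := by
  set U : Matrix m m ℝ := (hA.eigenvectorUnitary : Matrix m m ℝ) with hUdef
  have hU1 : star U * U = 1 := (Matrix.mem_unitaryGroup_iff').mp hA.eigenvectorUnitary.2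
  have hU2 : U * star U = 1 := (Matrix.mem_unitaryGroup_iff).mp hA.eigenvectorUnitary.2
  have hC : star U * A * U = Matrix.diagonal (RCLike.ofReal ∘ hA.eigenvalues) :=
    by have := hA.conjStarAlgAut_star_eigenvectorUnitary; rwa [Unitary.conjStarAlgAut_star_apply] at this
  have hconj : ∀ j : ℕ, star U * (A ^ j) * U =
      Matrix.diagonal (RCLike.ofReal ∘ hA.eigenvalues) ^ j := by
    intro j
    induction j with
    | zero => simp [hU1]
    | succ j ih =>
        have : star U * A ^ (j + 1) * U = (star U * A ^ j * U) * (star U * A * U) := by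
          have : (star U * A ^ j * U) * (star U * A * U)
              = star U * A ^ j * (U * star U) * A * U := by noncomm_ring
          rw [this, hU2, mul_one, pow_succ]
          noncomm_ring
        rw [this, ih, hC, pow_succ]
  have htr : (A ^ k).trace = (star U * (A ^ k) * U).trace := by
    rw [Matrix.trace_mul_cycle, hU2, one_mul]
  rw [htr, hconj, Matrix.diagonal_pow, Matrix.trace_diagonal]
  simp

theorem stmt15 {n : ℕ} (G : SimpleGraph (Fin n)) (hne : G.edgeSet.Nonempty) :
    Real.sqrt (((somborMatrix G ^ 2).trace) ^ 3 / (somborMatrix G ^ 4).trace) ≤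
      somborEnergy G := by
  set hA := somborMatrix_isHermitian G
  set a : Fin n → ℝ := fun i => |somborEigs G i| with ha
  have h2 : (somborMatrix G ^ 2).trace = ∑ i, a i ^ 2 := by
    rw [trace_pow_eq hA 2]; exact Finset.sum_congr rfl fun i _ => (sq_abs _).symm
  have h4 : (somborMatrix G ^ 4).trace = ∑ i, a i ^ 4 := by
    rw [trace_pow_eq hA 4]
    refine Finset.sum_congr rfl fun i _ => ?_
    rw [← abs_pow]
    exact (abs_of_nonneg (by positivity)).symm
  have hE : somborEnergy G = ∑ i, a i := rfl
  have hanonneg : ∀ i, 0 ≤ a i := fun i => abs_nonneg _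
  set T2 := ∑ i, a i ^ 2 with hT2
  set T4 := ∑ i, a i ^ 4 with hT4
  set E := ∑ i, a i with hEd
  have hEnn : 0 ≤ E := Finset.sum_nonneg fun i _ => hanonneg i
  rw [h2, h4, hE]
  rcases eq_or_lt_of_le (Finset.sum_nonneg (fun i _ => by positivity : ∀ i ∈ Finset.univ, (0:ℝ) ≤ a i ^ 2)) with hz | hpos
  · -- T2 = 0, so all a i = 0
    have hzero : ∀ i ∈ Finset.univ, a i ^ 2 = 0 := by
      intro i _
      have := (Finset.sum_eq_zero_iff_of_nonneg (fun i _ => by positivity)).mp hz.symm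
      exact this i (Finset.mem_univ i)
    have : T2 = 0 := hz.symm
    have hT4z : T4 = 0 := by
      apply Finset.sum_eq_zero
      intro i _
      have := hzero i (Finset.mem_univ i)
      have hai : a i = 0 := by
        nlinarith [sq_nonneg (a i)]
      simp [hai]
    rw [this, hT4z]
    simp [hEnn]
  · -- T2 > 0
    have hT2pos : 0 < T2 := hpos
    have hT4pos : 0 < T4 := by
      obtain ⟨i, -, hi⟩ := Finset.exists_lt_of_sum_lt (s := (Finset.univ : Finset (Fin n)))
        (f := fun _ => (0:ℝ)) (g := fun i => a i ^ 2) (by simpa using hpos)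
      have hai : 0 < a i := (hanonneg i).lt_of_ne fun h => by simp [← h] at hi
      have h1 : 0 < a i ^ 4 := by positivity
      have h2' : a i ^ 4 ≤ T4 := by
        rw [hT4]
        exact Finset.single_le_sum (f := fun j => a j ^ 4) (fun j _ => by positivity) (Finset.mem_univ i)
      linarith
    set T3 := ∑ i, a i ^ 3 with hT3
    have hT3nn : 0 ≤ T3 := Finset.sum_nonneg fun i _ => by positivity
    have c1 : T2 ^ 2 ≤ E * T3 := by
      have := Finset.sum_sq_le_sum_mul_sum_of_sq_eq_mul (Finset.univ : Finset (Fin n))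
        (r := fun i => a i ^ 2) (f := fun i => a i) (g := fun i => a i ^ 3)
        (fun i _ => hanonneg i) (fun i _ => by positivity)
        (fun i _ => by ring)
      simpa [hT2, hEd, hT3, Finset.sum_pow] using this
    have c2 : T3 ^ 2 ≤ T2 * T4 := by
      have := Finset.sum_mul_sq_le_sq_mul_sq (Finset.univ : Finset (Fin n))
        (fun i => a i) (fun i => a i ^ 2)
      have e1 : ∀ i : Fin n, a i * a i ^ 2 = a i ^ 3 := fun i => by ring
      have e2 : ∀ i : Fin n, (a i ^ 2) ^ 2 = a i ^ 4 := fun i => by ring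
      simpa [e1, e2, hT3, hT2, hT4] using this
    have key : T2 ^ 3 ≤ E ^ 2 * T4 := by
      have h1 : T2 ^ 2 * T2 ^ 2 ≤ (E * T3) * (E * T3) :=
        mul_self_le_mul_self (sq_nonneg T2) c1
      have h2 : E ^ 2 * T3 ^ 2 ≤ E ^ 2 * (T2 * T4) :=
        mul_le_mul_of_nonneg_left c2 (sq_nonneg E)
      nlinarith [hpos, hT4pos]
    have hdiv : T2 ^ 3 / T4 ≤ E ^ 2 := (div_le_iff₀ hT4pos).mpr (by linarith)
    calc Real.sqrt (T2 ^ 3 / T4) ≤ Real.sqrt (E ^ 2) := Real.sqrt_le_sqrt hdiv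
      _ = E := Real.sqrt_sq hEnn
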